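/- For all γ, μ ∈ (0,1], the maximum over p ∈ (0,1) of min{ 1 + γ(1−p), (√p + √(μ(1−p)))² } equals (γ + μ + 1)² / ((γ + μ + 1)² − 4μγ), and this value is strictly smaller than 1 + μ. -/

import Mathlib

open Set

set_option maxHeartbeats 1000000

theorem best_of_two
    (γ μ : ℝ) (hγ : γ ∈ Ioc (0:ℝ) 1) (hμ : μ ∈ Ioc (0:ℝ) 1) :
    IsGreatest {v : ℝ | ∃ p ∈ Ioo (0:ℝ) 1,
        v = min (1 + γ * (1 - p))
                ((Real.sqrt p + Real.sqrt (μ * (1 - p))) ^ 2)}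
      ((γ + μ + 1) ^ 2 / ((γ + μ + 1) ^ 2 - 4 * μ * γ)) ∧
    (γ + μ + 1) ^ 2 / ((γ + μ + 1) ^ 2 - 4 * μ * γ) < 1 + μ := by
  obtain ⟨hγ0, hγ1⟩ := hγ
  obtain ⟨hμ0, hμ1⟩ := hμ
  have hg : 0 < γ - μ + 1 := by linarith
  have hA : 0 < (γ - μ + 1) ^ 2 := by positivity
  have hD : 0 < (γ + μ + 1) ^ 2 - 4 * μ * γ := by nlinarith [sq_nonneg (γ - μ + 1)]
  set A : ℝ := (γ - μ + 1) ^ 2 with hAdef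
  set D : ℝ := (γ + μ + 1) ^ 2 - 4 * μ * γ with hDdef
  have hDA : D = A + 4 * μ := by rw [hAdef, hDdef]; ring
  have hq0 : 0 < A / D := div_pos hA hD
  have hq1 : A / D < 1 := by
    rw [div_lt_one hD, hDA]; linarith
  have h1q : 1 - A / D = 4 * μ / D := by
    field_simp
    linarith [hDA]
  have hsD : Real.sqrt D ^ 2 = D := Real.sq_sqrt hD.le
  have hsDpos : 0 < Real.sqrt D := Real.sqrt_pos.2 hD
  -- value of the linear branch at p* = A/D
  have hf : 1 + γ * (1 - A / D) = (γ + μ + 1) ^ 2 / D := by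
    rw [h1q, eq_div_iff hD.ne', add_mul, one_mul, mul_assoc, div_mul_cancel₀ _ hD.ne', hDdef]
    ring
  constructor
  constructor
  · -- membership: p = A/D attains the value
    refine ⟨A / D, ⟨hq0, hq1⟩, ?_⟩
    have h1 : Real.sqrt (A / D) = (γ - μ + 1) / Real.sqrt D := by
      rw [Real.sqrt_div hA.le, hAdef, Real.sqrt_sq hg.le]
    have h2 : Real.sqrt (μ * (1 - A / D)) = 2 * μ / Real.sqrt D := by
      have : μ * (1 - A / D) = (2 * μ) ^ 2 / D := by
        rw [h1q]; field_simp; ring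
      rw [this, Real.sqrt_div (by positivity), Real.sqrt_sq (by linarith)]
    have hgv : (Real.sqrt (A / D) + Real.sqrt (μ * (1 - A / D))) ^ 2
        = (γ + μ + 1) ^ 2 / D := by
      rw [h1, h2, ← add_div, div_pow, hsD]
      ring_nf
    rw [hf, hgv, min_self]
  · -- upper bound
    rintro v ⟨p, ⟨hp0, hp1⟩, rfl⟩
    rcases le_total (A / D) p with hple | hple
    · -- linear branch is small
      refine le_trans (min_le_left _ _) ?_
      rw [← hf]
      have : γ * (1 - p) ≤ γ * (1 - A / D) :=
        mul_le_mul_of_nonneg_left (by linarith) hγ0.le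
      linarith
    · -- sqrt branch is small
      refine le_trans (min_le_right _ _) ?_
      set a : ℝ := (γ - μ + 1) / 2 with hadef
      have ha0 : 0 < a := by rw [hadef]; linarith
      have ha1 : a ≤ 1 := by rw [hadef]; linarith
      have hsp : Real.sqrt p ^ 2 = p := Real.sq_sqrt hp0.le
      have hsm : Real.sqrt (μ * (1 - p)) ^ 2 = μ * (1 - p) :=
        Real.sq_sqrt (by nlinarith)
      -- AM-GM step
      have key : 2 * (Real.sqrt p * Real.sqrt (μ * (1 - p)))
          ≤ p * μ / a + a * (1 - p) := by
        have h1 : Real.sqrt p * Real.sqrt (μ * (1 - p))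
            = Real.sqrt (p * (μ * (1 - p))) := (Real.sqrt_mul hp0.le _).symm
        have h2 : Real.sqrt (p * (μ * (1 - p)))
            ≤ (p * μ / a + a * (1 - p)) / 2 := by
          rw [show p * (μ * (1 - p)) = (p * μ / a) * (a * (1 - p)) by
            field_simp]
          have hx : 0 ≤ p * μ / a := by positivity
          have hy : 0 ≤ a * (1 - p) := by nlinarith
          calc Real.sqrt (p * μ / a * (a * (1 - p)))
              ≤ Real.sqrt (((p * μ / a + a * (1 - p)) / 2) ^ 2) := by
                apply Real.sqrt_le_sqrt; nlinarith [sq_nonneg (p * μ / a - a * (1 - p))]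
            _ = (p * μ / a + a * (1 - p)) / 2 := Real.sqrt_sq (by positivity)
        linarith [h1 ▸ h2]
      have hexp : (Real.sqrt p + Real.sqrt (μ * (1 - p))) ^ 2
          = p + μ * (1 - p) + 2 * (Real.sqrt p * Real.sqrt (μ * (1 - p))) := by
        rw [add_sq, hsp, hsm]; ring
      -- linear upper envelope is increasing in p, bounded by V at A/D
      have hslope : 0 ≤ (a + μ) * (1 - a) / a :=
        div_nonneg (mul_nonneg (by positivity) (by linarith)) ha0.le
      have hlin : p + μ * (1 - p) + (p * μ / a + a * (1 - p))
          ≤ (γ + μ + 1) ^ 2 / D := by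
        have hRHSq : (A / D) + μ * (1 - A / D) + ((A / D) * μ / a + a * (1 - A / D))
            = (γ + μ + 1) ^ 2 / D := by
          rw [eq_div_iff hD.ne']
          field_simp
          simp only [hadef, hAdef, hDdef]
          ring
        have hdiff : ((A / D) + μ * (1 - A / D) + ((A / D) * μ / a + a * (1 - A / D)))
            - (p + μ * (1 - p) + (p * μ / a + a * (1 - p)))
            = (A / D - p) * ((a + μ) * (1 - a) / a) := by
          field_simp
          ring
        have h := mul_nonneg (sub_nonneg.2 hple) hslope
        linarith
      rw [hexp]
      linarith
  · -- strict inequality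
    rw [div_lt_iff₀ hD, hDdef]
    have hlt : γ - μ - 1 < 0 := by linarith
    have h2 : 0 < (γ - μ - 1) ^ 2 := by nlinarith
    nlinarith [mul_pos hμ0 h2]
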